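/- Let g11, g12, g21, g22 > 0, P1, P2 > 0 and μ ≥ 0. Define, for (P11, P12) ∈ [0, P1] × [0, P2], the full-power weighted sum rate F(P11, P12) = log2((1 + g11·P1 + g12·P2)/(1 + g11·(P1 − P11) + g12·(P2 − P12))) + μ·log2((1 + g21·P1 + g22·P2)/(1 + g21·P11 + g22·P12)). Then for each fixed P12 ∈ [0, P2], the function P11 ↦ F(P11, P12) is convex on [0, P1] (its partial derivative in P11 is nondecreasing), and likewise for each fixed P11 the function P12 ↦ F(P11, P12) is convex on [0, P2]. Consequently the maximum of F over the box [0, P1] × [0, P2] is attained at one of its four vertices. -/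
import Mathlib

lemma neg_logb_affine_convexOn (c m : ℝ) (s : Set ℝ) (hs : Convex ℝ s)
    (hpos : ∀ x ∈ s, 0 < c + m * x) :
    ConvexOn ℝ s (fun x => -Real.logb 2 (c + m * x)) := by
  have hlog2 : (0:ℝ) < Real.log 2 := Real.log_pos (by norm_num)
  have hconc : ConvexOn ℝ (Set.Ioi (0:ℝ)) (fun y => -Real.log y) :=
    strictConcaveOn_log_Ioi.concaveOn.neg
  refine ⟨hs, ?_⟩
  intro x hx y hy a b ha hb hab
  have hxp := hpos x hx
  have hyp := hpos y hy
  have key : c + m * (a * x + b * y) = a * (c + m * x) + b * (c + m * y) := by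
    linear_combination c * hab.symm
  have h2 := hconc.2 (Set.mem_Ioi.mpr hxp) (Set.mem_Ioi.mpr hyp) ha hb hab
  simp only [smul_eq_mul] at h2 ⊢
  rw [key]
  have heq : Real.logb 2 = fun z => Real.log z / Real.log 2 := by
    funext z; rw [Real.logb]
  rw [heq]
  simp only
  have h4 := mul_le_mul_of_nonneg_right h2 (inv_nonneg.mpr hlog2.le)
  simp only [div_eq_mul_inv]
  ring_nf at h4 ⊢
  linarith [h4]

lemma slice_convexOn (N1 N2 c1 c2 m1 m2 μ : ℝ) (hμ : 0 ≤ μ) (s : Set ℝ) (hs : Convex ℝ s)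
    (hN1 : 0 < N1) (hN2 : 0 < N2)
    (h1 : ∀ x ∈ s, 0 < c1 + m1 * x) (h2 : ∀ x ∈ s, 0 < c2 + m2 * x) :
    ConvexOn ℝ s (fun x => Real.logb 2 (N1 / (c1 + m1 * x)) +
      μ * Real.logb 2 (N2 / (c2 + m2 * x))) := by
  have hg : ConvexOn ℝ s (fun x => (Real.logb 2 N1 + -Real.logb 2 (c1 + m1 * x)) +
      μ • (Real.logb 2 N2 + -Real.logb 2 (c2 + m2 * x))) :=
    ((convexOn_const _ hs).add (neg_logb_affine_convexOn c1 m1 s hs h1)).add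
      (ConvexOn.smul hμ ((convexOn_const _ hs).add (neg_logb_affine_convexOn c2 m2 s hs h2)))
  refine hg.congr ?_
  intro x hx
  simp only [smul_eq_mul]
  rw [Real.logb_div (ne_of_gt hN1) (ne_of_gt (h1 x hx)),
    Real.logb_div (ne_of_gt hN2) (ne_of_gt (h2 x hx))]
  ring

/-- Full-power weighted sum rate as a function of the powers `P11`, `P12`
that BTS 1 and BTS 2 allocate to mobile 1 (the rest of each budget going
to mobile 2). -/
noncomputable def fullPowerWSR (g11 g12 g21 g22 P1 P2 μ : ℝ) (P11 P12 : ℝ) : ℝ :=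
  Real.logb 2 ((1 + g11 * P1 + g12 * P2) / (1 + g11 * (P1 - P11) + g12 * (P2 - P12))) +
    μ * Real.logb 2 ((1 + g21 * P1 + g22 * P2) / (1 + g21 * P11 + g22 * P12))

theorem fullPowerWSR_convex_and_max_at_vertex
    (g11 g12 g21 g22 P1 P2 μ : ℝ)
    (hg11 : 0 < g11) (hg12 : 0 < g12) (hg21 : 0 < g21) (hg22 : 0 < g22)
    (hP1 : 0 < P1) (hP2 : 0 < P2) (hμ : 0 ≤ μ) :
    (∀ P12 ∈ Set.Icc (0 : ℝ) P2,
      ConvexOn ℝ (Set.Icc (0 : ℝ) P1) (fun P11 => fullPowerWSR g11 g12 g21 g22 P1 P2 μ P11 P12)) ∧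
    (∀ P11 ∈ Set.Icc (0 : ℝ) P1,
      ConvexOn ℝ (Set.Icc (0 : ℝ) P2) (fun P12 => fullPowerWSR g11 g12 g21 g22 P1 P2 μ P11 P12)) ∧
    (∃ v1 v2 : ℝ,
      ((v1, v2) = ((0 : ℝ), (0 : ℝ)) ∨ (v1, v2) = (P1, (0 : ℝ)) ∨
        (v1, v2) = ((0 : ℝ), P2) ∨ (v1, v2) = (P1, P2)) ∧
      ∀ P11 ∈ Set.Icc (0 : ℝ) P1, ∀ P12 ∈ Set.Icc (0 : ℝ) P2,
        fullPowerWSR g11 g12 g21 g22 P1 P2 μ P11 P12 ≤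
          fullPowerWSR g11 g12 g21 g22 P1 P2 μ v1 v2) := by
  have hN1 : (0:ℝ) < 1 + g11 * P1 + g12 * P2 := by nlinarith
  have hN2 : (0:ℝ) < 1 + g21 * P1 + g22 * P2 := by nlinarith
  -- convexity in P11
  have conv1 : ∀ P12 ∈ Set.Icc (0 : ℝ) P2,
      ConvexOn ℝ (Set.Icc (0 : ℝ) P1)
        (fun P11 => fullPowerWSR g11 g12 g21 g22 P1 P2 μ P11 P12) := by
    intro P12 hP12
    obtain ⟨h12a, h12b⟩ := hP12
    have h := slice_convexOn (1 + g11 * P1 + g12 * P2) (1 + g21 * P1 + g22 * P2)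
      (1 + g11 * P1 + g12 * (P2 - P12)) (1 + g22 * P12) (-g11) g21 μ hμ
      (Set.Icc (0:ℝ) P1) (convex_Icc _ _) hN1 hN2
      (fun x hx => by obtain ⟨hx1, hx2⟩ := hx; nlinarith)
      (fun x hx => by obtain ⟨hx1, hx2⟩ := hx; nlinarith)
    refine h.congr ?_
    intro x hx
    show _ = fullPowerWSR g11 g12 g21 g22 P1 P2 μ x P12
    rw [fullPowerWSR]
    ring_nf
  -- convexity in P12
  have conv2 : ∀ P11 ∈ Set.Icc (0 : ℝ) P1,
      ConvexOn ℝ (Set.Icc (0 : ℝ) P2)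
        (fun P12 => fullPowerWSR g11 g12 g21 g22 P1 P2 μ P11 P12) := by
    intro P11 hP11
    obtain ⟨h11a, h11b⟩ := hP11
    have h := slice_convexOn (1 + g11 * P1 + g12 * P2) (1 + g21 * P1 + g22 * P2)
      (1 + g11 * (P1 - P11) + g12 * P2) (1 + g21 * P11) (-g12) g22 μ hμ
      (Set.Icc (0:ℝ) P2) (convex_Icc _ _) hN1 hN2
      (fun x hx => by obtain ⟨hx1, hx2⟩ := hx; nlinarith)
      (fun x hx => by obtain ⟨hx1, hx2⟩ := hx; nlinarith)
    refine h.congr ?_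
    intro x hx
    show _ = fullPowerWSR g11 g12 g21 g22 P1 P2 μ P11 x
    rw [fullPowerWSR]
    ring_nf
  refine ⟨conv1, conv2, ?_⟩
  set f := fullPowerWSR g11 g12 g21 g22 P1 P2 μ with hf
  set A := f 0 0; set B := f P1 0; set C := f 0 P2; set D := f P1 P2
  set M := max (max A B) (max C D) with hM
  have h0mem1 : (0:ℝ) ∈ Set.Icc (0:ℝ) P1 := ⟨le_refl _, hP1.le⟩
  have hPmem1 : P1 ∈ Set.Icc (0:ℝ) P1 := ⟨hP1.le, le_refl _⟩
  have h0mem2 : (0:ℝ) ∈ Set.Icc (0:ℝ) P2 := ⟨le_refl _, hP2.le⟩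
  have hPmem2 : P2 ∈ Set.Icc (0:ℝ) P2 := ⟨hP2.le, le_refl _⟩
  have hbound : ∀ P11 ∈ Set.Icc (0:ℝ) P1, ∀ P12 ∈ Set.Icc (0:ℝ) P2, f P11 P12 ≤ M := by
    intro P11 h11 P12 h12
    have step1 : f P11 P12 ≤ max (f 0 P12) (f P1 P12) := by
      have := (conv1 P12 h12).le_on_segment h0mem1 hPmem1
        (by rwa [segment_eq_Icc hP1.le])
      exact this
    have step2 : f 0 P12 ≤ max A C := by
      have := (conv2 0 h0mem1).le_on_segment h0mem2 hPmem2
        (by rwa [segment_eq_Icc hP2.le])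
      exact this
    have step3 : f P1 P12 ≤ max B D := by
      have := (conv2 P1 hPmem1).le_on_segment h0mem2 hPmem2
        (by rwa [segment_eq_Icc hP2.le])
      exact this
    have hAC : max A C ≤ M := max_le
      (le_trans (le_max_left A B) (le_max_left _ _))
      (le_trans (le_max_left C D) (le_max_right _ _))
    have hBD : max B D ≤ M := max_le
      (le_trans (le_max_right A B) (le_max_left _ _))
      (le_trans (le_max_right C D) (le_max_right _ _))
    exact le_trans step1 (max_le (le_trans step2 hAC) (le_trans step3 hBD))
  rcases max_choice (max A B) (max C D) with h | h
  · rcases max_choice A B with h' | h'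
    · exact ⟨0, 0, Or.inl rfl, fun P11 h11 P12 h12 => by
        have := hbound P11 h11 P12 h12; rw [hM, h, h'] at this; exact this⟩
    · exact ⟨P1, 0, Or.inr (Or.inl rfl), fun P11 h11 P12 h12 => by
        have := hbound P11 h11 P12 h12; rw [hM, h, h'] at this; exact this⟩
  · rcases max_choice C D with h' | h'
    · exact ⟨0, P2, Or.inr (Or.inr (Or.inl rfl)), fun P11 h11 P12 h12 => by
        have := hbound P11 h11 P12 h12; rw [hM, h, h'] at this; exact this⟩
    · exact ⟨P1, P2, Or.inr (Or.inr (Or.inr rfl)), fun P11 h11 P12 h12 => by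
        have := hbound P11 h11 P12 h12; rw [hM, h, h'] at this; exact this⟩
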